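/- Indistinguishability of t copies of the entanglement-based public key from the maximally mixed state: for n ≥ 1 and t ≥ 1, D( (1/2^{n−1}) Σ_{k ∈ Ω_n} (ρ_k^0)^{⊗t} , ((1/2^n)·1)^{⊗t} ) < √(2^t / 2^{n+1}) (equivalently, the trace distance is less than √(1/2^{n−t+1})). -/

import Mathlib

open Matrix Finset ComplexOrder

/-- Hamming weight of a bit string. -/
def hammingW {n : ℕ} (ν : Fin n → ZMod 2) : ℕ :=
  (Finset.univ.filter fun l => ν l = 1).card

/-- `Ω_n`: the bit strings of length `n` with odd Hamming weight. -/
def Omega (n : ℕ) : Finset (Fin n → ZMod 2) :=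
  Finset.univ.filter fun k => Odd (hammingW k)

/-- The public-key state `ρ_k^0`. -/
noncomputable def rho0 (n : ℕ) (k : Fin n → ZMod 2) :
    Matrix (Fin n → ZMod 2) (Fin n → ZMod 2) ℂ :=
  (1 / 2 ^ n : ℂ) •
    ∑ i : Fin n → ZMod 2, ∑ x : ZMod 2, Matrix.single i (i + x • k) (1 : ℂ)

/-- Tensor product of a `t`-indexed family of matrices over index type `m`. -/
def tensT {t : ℕ} {m : Type*} [Fintype m] (ρ : Fin t → Matrix m m ℂ) :
    Matrix (Fin t → m) (Fin t → m) ℂ :=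
  Matrix.of fun u v => ∏ s, ρ s (u s) (v s)

/-- `|A|` is the positive semidefinite square root of `AᴴA`. -/
noncomputable def matAbs {m : Type*} [Fintype m] [DecidableEq m] (A : Matrix m m ℂ) :
    Matrix m m ℂ :=
  (Matrix.posSemidef_conjTranspose_mul_self A).1.eigenvectorUnitary.1 *
    Matrix.diagonal ((↑) ∘ (√·) ∘ (Matrix.posSemidef_conjTranspose_mul_self A).1.eigenvalues) *
    (star (Matrix.posSemidef_conjTranspose_mul_self A).1.eigenvectorUnitary : Matrix m m ℂ)

/-- The trace norm `‖A‖_tr = tr |A|` (a real number). -/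
noncomputable def traceNorm {m : Type*} [Fintype m] [DecidableEq m] (A : Matrix m m ℂ) : ℝ :=
  (matAbs A).trace.re

lemma psd_diag_re_nonneg {m : Type*} [Fintype m] [DecidableEq m] {A : Matrix m m ℂ}
    (hA : A.PosSemidef) (i : m) : 0 ≤ (A i i).re := by
  have := hA.re_dotProduct_nonneg (Pi.single i 1)
  simpa [dotProduct, mulVec, Pi.single_apply] using this

lemma matAbs_psd {m : Type*} [Fintype m] [DecidableEq m] (A : Matrix m m ℂ) :
    (matAbs A).PosSemidef := by
  unfold matAbs
  apply PosSemidef.mul_mul_conjTranspose_same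
  rw [posSemidef_diagonal_iff]
  intro i
  simp only [Function.comp_apply]
  exact Complex.zero_le_real.mpr (Real.sqrt_nonneg _)

lemma matAbs_mul_self {m : Type*} [Fintype m] [DecidableEq m] (A : Matrix m m ℂ) :
    matAbs A * matAbs A = Aᴴ * A := by
  have hA := Matrix.posSemidef_conjTranspose_mul_self A
  conv_rhs => rw [hA.1.spectral_theorem]
  unfold matAbs
  rw [Unitary.conjStarAlgAut_apply]
  have hU := Unitary.coe_star_mul_self hA.1.eigenvectorUnitary
  simp only [Matrix.mul_assoc]
  rw [← Matrix.mul_assoc (star _) _ _, hU, Matrix.one_mul, ← Matrix.mul_assoc (diagonal _),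
    diagonal_mul_diagonal]
  congr 3
  funext i
  simp only [Function.comp_apply]
  rw [← Complex.ofReal_mul, Real.mul_self_sqrt (hA.eigenvalues_nonneg i)]
  rfl

lemma traceNorm_nonneg {m : Type*} [Fintype m] [DecidableEq m] (A : Matrix m m ℂ) :
    0 ≤ traceNorm A := by
  have h := matAbs_psd A
  unfold traceNorm matAbs
  rw [Matrix.trace, Complex.re_sum]
  exact Finset.sum_nonneg fun i _ => psd_diag_re_nonneg h i

lemma traceNorm_sq_le {m : Type*} [Fintype m] [DecidableEq m] (A : Matrix m m ℂ) :
    traceNorm A ^ 2 ≤ (Fintype.card m : ℝ) * (Aᴴ * A).trace.re := by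
  set B := matAbs A with hBdef
  have hB : B.PosSemidef := matAbs_psd A
  have hBB : B * B = Aᴴ * A := matAbs_mul_self A
  have hherm : B.IsHermitian := hB.1
  -- rewrite RHS trace
  have hR : (Aᴴ * A).trace.re = ∑ i, ∑ j, Complex.normSq (B i j) := by
    rw [← hBB, Matrix.trace, Complex.re_sum]
    congr 1; ext i
    rw [Matrix.diag_apply, Matrix.mul_apply, Complex.re_sum]
    congr 1; ext j
    have : B j i = (starRingEnd ℂ) (B i j) := by
      conv_lhs => rw [← hherm.eq]
      simp [Matrix.conjTranspose_apply]
    rw [this, Complex.mul_conj]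
    simp
  have hL : traceNorm A = ∑ i, (B i i).re := by
    unfold traceNorm; rw [← hBdef, Matrix.trace, Complex.re_sum]; rfl
  rw [hL, hR]
  calc (∑ i, (B i i).re) ^ 2 ≤ (Fintype.card m : ℝ) * ∑ i, (B i i).re ^ 2 := by
        simpa using sq_sum_le_card_mul_sum_sq (s := univ) (f := fun i => (B i i).re)
    _ ≤ (Fintype.card m : ℝ) * ∑ i, ∑ j, Complex.normSq (B i j) := by
        apply mul_le_mul_of_nonneg_left _ (by positivity)
        apply Finset.sum_le_sum
        intro i _
        calc (B i i).re ^ 2 ≤ Complex.normSq (B i i) := by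
              rw [Complex.normSq_apply]; nlinarith [sq_nonneg (B i i).im]
          _ ≤ ∑ j, Complex.normSq (B i j) := by
              exact Finset.single_le_sum (f := fun j => Complex.normSq (B i j))
                (fun j _ => Complex.normSq_nonneg _) (mem_univ i)

lemma zmod2_univ : (Finset.univ : Finset (ZMod 2)) = {0, 1} := by decide

lemma mem_omega_ne_zero {n : ℕ} {k : Fin n → ZMod 2} (hk : k ∈ Omega n) : k ≠ 0 := by
  intro h
  rw [Omega, Finset.mem_filter] at hk
  subst h
  have : hammingW (0 : Fin n → ZMod 2) = 0 := by
    unfold hammingW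
    simp
  rw [this] at hk
  exact (Nat.not_odd_iff_even.mpr Even.zero) hk.2

lemma neg_one_pow_sum {n : ℕ} (hn : 1 ≤ n) :
    ∑ k : Fin n → ZMod 2, ((-1 : ℤ) ^ hammingW k) = 0 := by
  have h1 : ∀ k : Fin n → ZMod 2, ((-1 : ℤ) ^ hammingW k)
      = ∏ l : Fin n, (if k l = 1 then (-1 : ℤ) else 1) := by
    intro k
    rw [Finset.prod_ite, Finset.prod_const, Finset.prod_const, one_pow, mul_one]
    rfl
  simp_rw [h1]
  rw [← Fintype.piFinset_univ, ← Finset.prod_univ_sum (fun _ => univ)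
    (fun (_ : Fin n) (x : ZMod 2) => (if x = 1 then (-1 : ℤ) else 1))]
  have : ∀ l : Fin n, (∑ x : ZMod 2, (if x = 1 then (-1 : ℤ) else 1)) = 0 := by
    intro l; rw [zmod2_univ]; decide
  rw [Finset.prod_congr rfl (fun l _ => this l)]
  rw [Finset.prod_const, Finset.card_univ, Fintype.card_fin, zero_pow (by omega)]

lemma card_omega {n : ℕ} (hn : 1 ≤ n) : (Omega n).card = 2 ^ (n - 1) := by
  have h0 := neg_one_pow_sum hn
  have hsplit : ∑ k : Fin n → ZMod 2, ((-1 : ℤ) ^ hammingW k)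
      = ∑ k ∈ (univ.filter fun k : Fin n → ZMod 2 => Odd (hammingW k)), (-1 : ℤ)
        + ∑ k ∈ (univ.filter fun k : Fin n → ZMod 2 => ¬ Odd (hammingW k)), (1 : ℤ) := by
    rw [← Finset.sum_filter_add_sum_filter_not univ (fun k => Odd (hammingW k))]
    congr 1
    · exact Finset.sum_congr rfl fun k hk => Odd.neg_one_pow (Finset.mem_filter.mp hk).2
    · exact Finset.sum_congr rfl fun k hk =>
        Even.neg_one_pow (Nat.not_odd_iff_even.mp (Finset.mem_filter.mp hk).2)
  have hcard : (univ.filter fun k : Fin n → ZMod 2 => Odd (hammingW k)).card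
      + (univ.filter fun k : Fin n → ZMod 2 => ¬ Odd (hammingW k)).card = 2 ^ n := by
    rw [Finset.card_filter_add_card_filter_not]
    simp [Finset.card_univ]
  rw [hsplit] at h0
  simp only [Finset.sum_const, smul_eq_mul, mul_one, mul_neg] at h0
  have : (Omega n).card = (univ.filter fun k : Fin n → ZMod 2 => Odd (hammingW k)).card := rfl
  rw [this]
  have h2 : (2:ℕ) ^ n = 2 ^ (n-1) * 2 := by rw [← pow_succ]; congr 1; omega
  simp only [nsmul_eq_mul, mul_one, mul_neg] at h0
  omega

/-- abbreviation for the basic factor -/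
noncomputable def ee {n : ℕ} (k a b : Fin n → ZMod 2) : ℂ :=
  (if b = a then 1 else 0) + (if b = a + k then 1 else 0)

lemma rho0_apply {n : ℕ} (k a b : Fin n → ZMod 2) :
    rho0 n k a b = (1 / 2 ^ n : ℂ) * ee k a b := by
  unfold rho0 ee
  rw [Matrix.smul_apply, smul_eq_mul]
  congr 1
  simp only [Matrix.sum_apply, Matrix.single, Matrix.of_apply]
  rw [Finset.sum_comm]
  simp only [ite_and, Finset.sum_ite_eq', Finset.mem_univ, if_true]
  rw [zmod2_univ]
  rw [Finset.sum_insert (by decide), Finset.sum_singleton]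
  simp [eq_comm]

lemma tensT_rho0_apply {n t : ℕ} (k : Fin n → ZMod 2) (u v : Fin t → Fin n → ZMod 2) :
    tensT (fun _ : Fin t => rho0 n k) u v
      = (1 / 2 ^ n : ℂ) ^ t * ∏ s, ee k (u s) (v s) := by
  unfold tensT
  rw [Matrix.of_apply]
  simp_rw [rho0_apply]
  rw [Finset.prod_mul_distrib, Finset.prod_const, Finset.card_univ, Fintype.card_fin]

lemma tensT_id_apply {n t : ℕ} (u v : Fin t → Fin n → ZMod 2) :
    tensT (fun _ : Fin t =>
        (1 / 2 ^ n : ℂ) • (1 : Matrix (Fin n → ZMod 2) (Fin n → ZMod 2) ℂ)) u v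
      = (1 / 2 ^ n : ℂ) ^ t * (if u = v then 1 else 0) := by
  unfold tensT
  rw [Matrix.of_apply]
  simp_rw [Matrix.smul_apply, Matrix.one_apply, smul_eq_mul]
  rw [Finset.prod_mul_distrib, Finset.prod_const, Finset.card_univ, Fintype.card_fin,
    Finset.prod_boole]
  congr 1
  simp [funext_iff]

/-- factorization of pair sums over function types -/
lemma sum_pair_prod {α : Type*} [Fintype α] [DecidableEq α] {t : ℕ} (f : α → α → ℂ) :
    ∑ u : Fin t → α, ∑ v : Fin t → α, ∏ s, f (u s) (v s)
      = (∑ a : α, ∑ b : α, f a b) ^ t := by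
  have h1 : ∀ u : Fin t → α, (∑ v : Fin t → α, ∏ s, f (u s) (v s))
      = ∏ s, ∑ b : α, f (u s) b := by
    intro u
    rw [Finset.prod_univ_sum (fun _ => univ) (fun s b => f (u s) b), Fintype.piFinset_univ]
  simp_rw [h1]
  calc ∑ x : Fin t → α, ∏ s : Fin t, ∑ b : α, f (x s) b
      = ∑ x ∈ Fintype.piFinset (fun _ : Fin t => (univ : Finset α)),
          ∏ s : Fin t, ∑ b : α, f (x s) b := by rw [Fintype.piFinset_univ]
    _ = ∏ _s : Fin t, ∑ a : α, ∑ b : α, f a b :=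
        Finset.sum_prod_piFinset univ (fun _ a => ∑ b, f a b)
    _ = (∑ a : α, ∑ b : α, f a b) ^ t := by
        rw [Finset.prod_const, Finset.card_univ, Fintype.card_fin]

lemma card_F (n : ℕ) : (Fintype.card (Fin n → ZMod 2)) = 2 ^ n := by
  simp [ZMod.card 2]

lemma sum_ite_ite {n : ℕ} (x y : Fin n → ZMod 2) :
    ∑ b : Fin n → ZMod 2, (if b = x then (1:ℂ) else 0) * (if b = y then 1 else 0)
      = if x = y then 1 else 0 := by
  simp only [mul_ite, mul_one, mul_zero]
  rw [Finset.sum_ite_eq' univ y (fun b => if b = x then (1:ℂ) else 0)]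
  simp [eq_comm]

lemma sum_ee_mul {n : ℕ} {k k' : Fin n → ZMod 2} (hk : k ≠ 0) (hk' : k' ≠ 0) :
    ∑ a : Fin n → ZMod 2, ∑ b : Fin n → ZMod 2, ee k a b * ee k' a b
      = (2:ℂ) ^ n * (1 + if k = k' then 1 else 0) := by
  have hb : ∀ a : Fin n → ZMod 2, ∑ b : Fin n → ZMod 2, ee k a b * ee k' a b
      = 1 + if k = k' then 1 else 0 := by
    intro a
    unfold ee
    simp_rw [add_mul, mul_add, Finset.sum_add_distrib, sum_ite_ite]
    have h1 : (a = a + k') = False := by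
      simp only [left_eq_add, eq_iff_iff, iff_false]; exact hk'
    have h2 : (a + k = a) = False := by
      simp only [add_eq_left, eq_iff_iff, iff_false]; exact hk
    have h3 : (a + k = a + k') = (k = k') := by simp [add_right_inj]
    simp only [h1, h2, h3, if_true, if_false]
    ring
  simp_rw [hb]
  rw [Finset.sum_const, Finset.card_univ, card_F, nsmul_eq_mul]
  push_cast
  ring

lemma ee_diag {n : ℕ} {k : Fin n → ZMod 2} (hk : k ≠ 0) (a : Fin n → ZMod 2) :
    ee k a a = 1 := by
  unfold ee
  rw [if_pos rfl, if_neg (by simpa [left_eq_add] using hk)]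
  ring

lemma sum_sum_ite {α : Type*} [DecidableEq α] (s : Finset α) (x y : ℂ) :
    ∑ k ∈ s, ∑ k' ∈ s, (if k = k' then x else y)
      = s.card * (x - y) + (s.card : ℂ) ^ 2 * y := by
  have h : ∀ k ∈ s, ∑ k' ∈ s, (if k = k' then x else y) = (x - y) + s.card * y := by
    intro k hk
    have : ∀ k' : α, (if k = k' then x else y) = (if k' = k then (x - y) else 0) + y := by
      intro k'; by_cases h : k = k' <;> simp [h, eq_comm] <;> ring
    simp_rw [this]
    rw [Finset.sum_add_distrib, Finset.sum_ite_eq' s k (fun _ => x - y), if_pos hk,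
      Finset.sum_const, nsmul_eq_mul]
  rw [Finset.sum_congr rfl h, Finset.sum_const, nsmul_eq_mul]
  ring


section main
variable (n t : ℕ)

noncomputable def Dmat : Matrix (Fin t → Fin n → ZMod 2) (Fin t → Fin n → ZMod 2) ℂ :=
  ((1 / 2 ^ (n - 1) : ℂ) • ∑ k ∈ Omega n, tensT (fun _ : Fin t => rho0 n k))
    - tensT (fun _ : Fin t =>
        (1 / 2 ^ n : ℂ) • (1 : Matrix (Fin n → ZMod 2) (Fin n → ZMod 2) ℂ))

lemma Dmat_apply (u v : Fin t → Fin n → ZMod 2) :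
    Dmat n t u v
      = (1 / 2 ^ (n-1) : ℂ) * (1 / 2 ^ n) ^ t
          * (∑ k ∈ Omega n, ∏ s, ee k (u s) (v s))
        - (1 / 2 ^ n : ℂ) ^ t * (if u = v then 1 else 0) := by
  unfold Dmat
  rw [Matrix.sub_apply, Matrix.smul_apply, Matrix.sum_apply, smul_eq_mul, tensT_id_apply]
  congr 1
  simp_rw [tensT_rho0_apply]
  rw [← Finset.mul_sum]
  ring

lemma conj_Dmat (u v : Fin t → Fin n → ZMod 2) :
    (starRingEnd ℂ) (Dmat n t u v) = Dmat n t u v := by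
  rw [Dmat_apply]
  have hee : ∀ (k a b : Fin n → ZMod 2), (starRingEnd ℂ) (ee k a b) = ee k a b := by
    intro k a b; unfold ee
    rw [map_add, apply_ite (starRingEnd ℂ), apply_ite (starRingEnd ℂ), _root_.map_one,
      map_zero]
  simp only [map_sub, _root_.map_mul, map_pow, map_div₀, _root_.map_one, map_sum, map_prod, hee,
    apply_ite (starRingEnd ℂ), map_zero, Complex.conj_ofNat]

lemma trace_Dmat (hn : 1 ≤ n) :
    ((Dmat n t)ᴴ * (Dmat n t)).trace
      = (((2:ℂ) ^ t - 1) / (2 ^ (n-1) * 2 ^ (n*t))) := by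
  classical
  -- trace as double sum of squares
  have h0 : ((Dmat n t)ᴴ * (Dmat n t)).trace
      = ∑ v : Fin t → Fin n → ZMod 2, ∑ u : Fin t → Fin n → ZMod 2,
          (Dmat n t u v) * (Dmat n t u v) := by
    rw [Matrix.trace]
    congr 1; ext v
    rw [Matrix.diag_apply, Matrix.mul_apply]
    congr 1; ext u
    rw [Matrix.conjTranspose_apply,
      show (star (Dmat n t u v)) = (starRingEnd ℂ) (Dmat n t u v) from rfl, conj_Dmat]
  rw [h0]
  -- abbreviations
  set K : ℂ := 2 ^ (n-1) with hK
  set N : ℂ := 2 ^ n with hN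
  set M : ℂ := 2 ^ t with hM
  have hKN : N = 2 * K := by
    rw [hK, hN, ← pow_succ']
    congr 1
    omega
  have hK0 : K ≠ 0 := by rw [hK]; positivity
  have hNz : N ≠ 0 := by rw [hN]; positivity
  have hN0 : (N : ℂ) ^ t ≠ 0 := pow_ne_zero _ hNz
  have hOm : ((Omega n).card : ℂ) = K := by
    rw [card_omega hn, hK]; push_cast; ring
  have hcardF : (Fintype.card (Fin t → Fin n → ZMod 2) : ℂ) = N ^ t := by
    rw [Fintype.card_fun, card_F, hN]; push_cast [Fintype.card_fin]; ring
  -- the P and χ parts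
  set P : (Fin t → Fin n → ZMod 2) → (Fin t → Fin n → ZMod 2) → ℂ :=
    fun u v => ∑ k ∈ Omega n, ∏ s, ee k (u s) (v s) with hP
  have hD : ∀ u v, Dmat n t u v
      = (1/K) * (1/N) ^ t * P u v - (1/N) ^ t * (if u = v then 1 else 0) := by
    intro u v; rw [Dmat_apply]
  have hsplit : ∀ u v, (Dmat n t u v) * (Dmat n t u v)
      = ((1/K) * (1/N)^t)^2 * (P u v * P u v)
        - 2 * ((1/K) * (1/N)^t * (1/N)^t) * (P u v * (if u = v then 1 else 0))
        + ((1/N)^t)^2 * ((if u = v then (1:ℂ) else 0) * (if u = v then 1 else 0)) := by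
    intro u v; rw [hD]; ring
  -- the three component sums
  have hS1 : ∑ v : Fin t → Fin n → ZMod 2, ∑ u : Fin t → Fin n → ZMod 2, P u v * P u v
      = K * (N^t * M - N^t) + K^2 * N^t := by
    have hPP : ∀ u v : Fin t → Fin n → ZMod 2, P u v * P u v
        = ∑ k ∈ Omega n, ∑ k' ∈ Omega n,
            ∏ s, (ee k (u s) (v s) * ee k' (u s) (v s)) := by
      intro u v
      rw [hP, Finset.sum_mul_sum]
      simp_rw [← Finset.prod_mul_distrib]
    simp_rw [hPP]
    rw [Finset.sum_comm]
    rw [Finset.sum_congr rfl fun u (_ : u ∈ univ) => Finset.sum_comm]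
    rw [Finset.sum_comm]
    rw [Finset.sum_congr rfl fun k (_ : k ∈ Omega n) =>
      Finset.sum_congr rfl fun u (_ : u ∈ univ) => Finset.sum_comm]
    rw [Finset.sum_congr rfl fun k (_ : k ∈ Omega n) => Finset.sum_comm]
    have hstep : ∀ k ∈ Omega n, ∀ k' ∈ Omega n,
        (∑ u : Fin t → Fin n → ZMod 2, ∑ v : Fin t → Fin n → ZMod 2,
          ∏ s, (ee k (u s) (v s) * ee k' (u s) (v s)))
        = if k = k' then N^t * M else N^t := by
      intro k hk k' hk'
      rw [sum_pair_prod (fun a b => ee k a b * ee k' a b),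
        sum_ee_mul (mem_omega_ne_zero hk) (mem_omega_ne_zero hk'), ← hN]
      by_cases h : k = k'
      · subst h
        rw [if_pos rfl]
        norm_num [mul_pow, hM]
      · simp only [if_neg h]
        norm_num
    rw [Finset.sum_congr rfl fun k hk =>
      Finset.sum_congr rfl fun k' hk' => hstep k hk k' hk']
    rw [sum_sum_ite (Omega n) (N^t * M) (N^t), hOm]
  have hS2 : ∑ v : Fin t → Fin n → ZMod 2, ∑ u : Fin t → Fin n → ZMod 2,
      P u v * (if u = v then 1 else 0) = N^t * K := by
    rw [Finset.sum_comm]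
    have h1 : ∀ u : Fin t → Fin n → ZMod 2,
        (∑ v : Fin t → Fin n → ZMod 2, P u v * (if u = v then 1 else 0)) = P u u := by
      intro u
      simp_rw [mul_ite, mul_one, mul_zero]
      exact Finset.sum_ite_eq univ u (fun v => P u v) |>.trans (by simp)
    simp_rw [h1]
    have h2 : ∀ u : Fin t → Fin n → ZMod 2, P u u = K := by
      intro u
      rw [hP]
      simp only
      rw [Finset.sum_congr rfl fun k hk => (Finset.prod_congr rfl
        fun s _ => ee_diag (mem_omega_ne_zero hk) (u s)).trans Finset.prod_const_one]
      rw [Finset.sum_const, nsmul_eq_mul, mul_one, hOm]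
    simp_rw [h2]
    rw [Finset.sum_const, Finset.card_univ, nsmul_eq_mul, hcardF]
  have hS3 : ∑ v : Fin t → Fin n → ZMod 2, ∑ u : Fin t → Fin n → ZMod 2,
      (if u = v then (1:ℂ) else 0) * (if u = v then 1 else 0) = N^t := by
    have h1 : ∀ u v : Fin t → Fin n → ZMod 2,
        (if u = v then (1:ℂ) else 0) * (if u = v then 1 else 0)
          = if u = v then (1:ℂ) else 0 := by
      intro u v; by_cases h : u = v <;> simp [h]
    simp_rw [h1]
    have h2 : ∀ v : Fin t → Fin n → ZMod 2,
        (∑ u : Fin t → Fin n → ZMod 2, if u = v then (1:ℂ) else 0) = 1 := by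
      intro v
      rw [Finset.sum_ite_eq' univ v (fun _ => (1:ℂ))]
      simp
    simp_rw [h2]
    rw [Finset.sum_const, Finset.card_univ, nsmul_eq_mul, mul_one, hcardF]
  simp_rw [hsplit]
  simp only [Finset.sum_add_distrib, Finset.sum_sub_distrib, ← Finset.mul_sum]
  rw [hS1, hS2, hS3]
  have hpowmul : (2:ℂ) ^ (n*t) = N ^ t := by rw [hN, pow_mul]
  rw [hpowmul]
  field_simp
  have hNN : N⁻¹ ^ t * N ^ t = 1 := by rw [← mul_pow, inv_mul_cancel₀ hNz, one_pow]
  simp only [one_div]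
  linear_combination (M - 1) * (N⁻¹ ^ t * N ^ t + 1) * hNN

end main


/-- `t` copies of the entanglement-based public key are indistinguishable from the
maximally mixed state. -/
theorem public_key_copies_indistinguishable (n t : ℕ) (hn : 1 ≤ n) (ht : 1 ≤ t) :
    (1 / 2) * traceNorm
        (((1 / 2 ^ (n - 1) : ℂ) • ∑ k ∈ Omega n, tensT (fun _ : Fin t => rho0 n k))
          - tensT (fun _ : Fin t =>
              (1 / 2 ^ n : ℂ) • (1 : Matrix (Fin n → ZMod 2) (Fin n → ZMod 2) ℂ)))
      < Real.sqrt (2 ^ t / 2 ^ (n + 1)) := by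
  have hEq : (((1 / 2 ^ (n - 1) : ℂ) • ∑ k ∈ Omega n, tensT (fun _ : Fin t => rho0 n k))
          - tensT (fun _ : Fin t =>
              (1 / 2 ^ n : ℂ) • (1 : Matrix (Fin n → ZMod 2) (Fin n → ZMod 2) ℂ)))
      = Dmat n t := rfl
  rw [hEq]
  set x := traceNorm (Dmat n t) with hx
  have h3 : 0 ≤ x := traceNorm_nonneg _
  set r : ℝ := ((2:ℝ)^t - 1) / (2^(n-1) * 2^(n*t)) with hr
  have h2t : (1:ℝ) ≤ 2 ^ t := one_le_pow₀ (by norm_num)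
  have htr : (((Dmat n t)ᴴ * Dmat n t).trace).re = r := by
    rw [trace_Dmat n t hn]
    have : (((2:ℂ) ^ t - 1) / (2 ^ (n-1) * 2 ^ (n*t))) = ((r : ℝ) : ℂ) := by
      rw [hr]; push_cast; ring
    rw [this, Complex.ofReal_re]
  have hcard : (Fintype.card (Fin t → Fin n → ZMod 2) : ℝ) = 2 ^ (n*t) := by
    rw [Fintype.card_fun, card_F]
    push_cast [Fintype.card_fin]
    rw [← pow_mul]
  have h1 : x ^ 2 ≤ ((2:ℝ)^t - 1) / 2^(n-1) := by
    calc x ^ 2 ≤ (Fintype.card (Fin t → Fin n → ZMod 2) : ℝ)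
          * (((Dmat n t)ᴴ * Dmat n t).trace).re := traceNorm_sq_le _
      _ = 2 ^ (n*t) * r := by rw [hcard, htr]
      _ = ((2:ℝ)^t - 1) / 2^(n-1) := by
          rw [hr]; field_simp
  have h4 : x ≤ Real.sqrt (((2:ℝ)^t - 1) / 2^(n-1)) := by
    rw [show x = Real.sqrt (x^2) from (Real.sqrt_sq h3).symm]
    exact Real.sqrt_le_sqrt h1
  have h5 : (1/2:ℝ) * Real.sqrt (((2:ℝ)^t - 1) / 2^(n-1))
      = Real.sqrt (((2:ℝ)^t - 1) / 2^(n+1)) := by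
    have hnum : ((2:ℝ)^t - 1)/2^(n+1) = (((2:ℝ)^t - 1)/2^(n-1)) * (1/4) := by
      have hpow : ((2:ℝ))^(n+1) = 2^(n-1) * 4 := by
        rw [show n+1 = (n-1)+2 by omega, pow_add]; norm_num
      rw [hpow]; field_simp; try ring
    rw [hnum, Real.sqrt_mul (div_nonneg (by linarith) (by positivity)) (1/4),
      show Real.sqrt (1/4) = 1/2 by
        rw [show (1/4:ℝ) = (1/2)^2 by norm_num, Real.sqrt_sq (by norm_num)]]
    ring
  have h6 : Real.sqrt (((2:ℝ)^t - 1) / 2^(n+1)) < Real.sqrt ((2:ℝ)^t / 2^(n+1)) := by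
    apply Real.sqrt_lt_sqrt (div_nonneg (by linarith) (by positivity))
    have hd : (0:ℝ) < 2^(n+1) := by positivity
    apply div_lt_div_of_pos_right ?_ hd
    linarith
  calc (1/2:ℝ) * x ≤ (1/2) * Real.sqrt (((2:ℝ)^t - 1) / 2^(n-1)) := by linarith
    _ = Real.sqrt (((2:ℝ)^t - 1) / 2^(n+1)) := h5
    _ < Real.sqrt ((2:ℝ)^t / 2^(n+1)) := h6
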